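/- Let G be a locally compact Hausdorff totally disconnected topological group and let H be a compact subgroup of G. Then there exists a compact open subgroup of G containing H. -/

import Mathlib

open Set Pointwise

section Aux

variable {G : Type*} [Group G] [TopologicalSpace G] [IsTopologicalGroup G]

/-- Van Dantzig: a locally compact Hausdorff totally disconnected group has a compact open
subgroup. -/
theorem exists_compact_open_subgroup_aux [LocallyCompactSpace G] [T2Space G]
    [TotallyDisconnectedSpace G] :
    ∃ K : Subgroup G, IsCompact (K : Set G) ∧ IsOpen (K : Set G) := by
  -- get a compact clopen neighborhood V of 1
  obtain ⟨C, hC, hCmem⟩ := exists_compact_mem_nhds (1 : G)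
  obtain ⟨V, ⟨hVclopen, hVmem⟩, hVC⟩ :=
    (loc_compact_Haus_tot_disc_of_zero_dim.nhds_hasBasis (a := (1 : G))).mem_iff.mp
      (interior_mem_nhds.mpr hCmem)
  replace hVmem : (1 : G) ∈ V := hVmem
  have hVcompact : IsCompact V :=
    hC.of_isClosed_subset hVclopen.isClosed (hVC.trans interior_subset)
  -- separate: V * U ⊆ V for some open nbhd of 1
  obtain ⟨U, hU, hVU⟩ := compact_open_separated_mul_right hVcompact hVclopen.isOpen le_rfl
  set W : Set G := U ∩ U⁻¹ with hW
  have hWnhds : W ∈ nhds (1 : G) := by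
    apply Filter.inter_mem hU
    simpa using (continuous_inv.continuousAt (x := (1 : G))).preimage_mem_nhds (by simpa using hU)
  have hWsymm : W⁻¹ = W := by
    ext x; simp [hW, Set.mem_inter_iff, and_comm]
  -- subgroup generated by W
  refine ⟨Subgroup.closure W, ?_, ?_⟩
  · -- compact: closed and contained in V
    have hopen : IsOpen ((Subgroup.closure W : Subgroup G) : Set G) :=
      Subgroup.isOpen_of_mem_nhds _ (Filter.mem_of_superset hWnhds Subgroup.subset_closure)
    have hsub : ((Subgroup.closure W : Subgroup G) : Set G) ⊆ V := by
      intro x hx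
      have hx' : x ∈ Submonoid.closure (W ∪ W⁻¹) := by
        rw [← Subgroup.closure_toSubmonoid] at *
        exact hx
      rw [hWsymm, Set.union_self] at hx'
      obtain ⟨l, hl, rfl⟩ := Submonoid.exists_list_of_mem_closure hx'
      have key : ∀ (l : List G), (∀ y ∈ l, y ∈ W) → ∀ v ∈ V, v * l.prod ∈ V := by
        intro l
        induction l with
        | nil => intro _ v hv; simpa using hv
        | cons a t ih =>
          intro hmem v hv
          rw [List.prod_cons, ← mul_assoc]
          exact ih (fun y hy => hmem y (List.mem_cons_of_mem a hy))
            (v * a) (hVU (Set.mul_mem_mul hv ((hmem a (List.mem_cons_self (a := a) (l := t))).1)))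
      simpa using key l hl 1 hVmem
    exact hVcompact.of_isClosed_subset
      ((Subgroup.closure W).isClosed_of_isOpen hopen) hsub
  · exact Subgroup.isOpen_of_mem_nhds _ (Filter.mem_of_superset hWnhds Subgroup.subset_closure)

end Aux

/-- In a locally compact Hausdorff totally disconnected topological group, every compact
subgroup is contained in a compact open subgroup. -/
theorem exists_compact_open_subgroup_containing
    (G : Type*) [Group G] [TopologicalSpace G] [IsTopologicalGroup G]
    [LocallyCompactSpace G] [T2Space G] [TotallyDisconnectedSpace G]
    (H : Subgroup G) (hH : IsCompact (H : Set G)) :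
    ∃ K : Subgroup G, IsCompact (K : Set G) ∧ IsOpen (K : Set G) ∧ H ≤ K := by
  obtain ⟨K₀, hK₀c, hK₀o⟩ := exists_compact_open_subgroup_aux (G := G)
  -- N = intersection of conjugates of K₀ by elements of H
  set N : Subgroup G := ⨅ h : H, K₀.map (MulAut.conj (h : G)).toMonoidHom with hN
  have hmemN : ∀ {g : G}, g ∈ N ↔ ∀ h : H, (h : G)⁻¹ * g * (h : G) ∈ K₀ := by
    intro g
    rw [hN, Subgroup.mem_iInf]
    refine forall_congr' fun h => ?_
    constructor
    · rintro ⟨k, hk, rfl⟩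
      simpa [MulAut.conj, mul_assoc] using hk
    · intro hg
      exact ⟨(h : G)⁻¹ * g * (h : G), hg, by simp [MulAut.conj, mul_assoc]⟩
  -- openness of N via tube lemma
  have hNopen : IsOpen (N : Set G) := by
    have hcont : Continuous fun p : G × G => p.1⁻¹ * p.2 * p.1 := by fun_prop
    have hsub : (H : Set G) ×ˢ ({1} : Set G) ⊆
        (fun p : G × G => p.1⁻¹ * p.2 * p.1) ⁻¹' (K₀ : Set G) := by
      rintro ⟨h, g⟩ ⟨-, hg⟩
      simp only [Set.mem_singleton_iff] at hg
      simp only [Set.mem_preimage, hg, mul_one, inv_mul_cancel, SetLike.mem_coe]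
      exact K₀.one_mem
    obtain ⟨u, v, _, hvo, hsu, hv1, huv⟩ := generalized_tube_lemma hH isCompact_singleton
      (hK₀o.preimage hcont) hsub
    apply Subgroup.isOpen_of_mem_nhds
    apply Filter.mem_of_superset (hvo.mem_nhds (hv1 rfl))
    intro g hg
    refine hmemN.mpr fun h => ?_
    exact huv (Set.mk_mem_prod (hsu h.2) hg)
  have hNcompact : IsCompact (N : Set G) := by
    refine hK₀c.of_isClosed_subset (N.isClosed_of_isOpen hNopen) ?_
    intro g hg
    simpa using hmemN.mp hg ⟨1, H.one_mem⟩
  -- H normalizes N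
  have hconj : ∀ h ∈ H, ∀ n ∈ N, h * n * h⁻¹ ∈ N := by
    intro h hh n hn
    refine hmemN.mpr fun h' => ?_
    have := hmemN.mp hn ⟨h⁻¹ * (h' : G), H.mul_mem (H.inv_mem hh) h'.2⟩
    simpa [mul_assoc, mul_inv_rev] using this
  -- K = H * N as a subgroup
  refine ⟨{ carrier := (H : Set G) * (N : Set G)
            one_mem' := ⟨1, H.one_mem, 1, N.one_mem, by simp⟩
            mul_mem' := ?_
            inv_mem' := ?_ }, ?_, ?_, ?_⟩
  · rintro a b ⟨h1, hh1, n1, hn1, rfl⟩ ⟨h2, hh2, n2, hn2, rfl⟩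
    refine ⟨h1 * h2, H.mul_mem hh1 hh2, (h2⁻¹ * n1 * h2) * n2,
      N.mul_mem (by simpa using hconj h2⁻¹ (H.inv_mem hh2) n1 hn1) hn2, ?_⟩
    group
  · rintro a ⟨h, hh, n, hn, rfl⟩
    refine ⟨h⁻¹, H.inv_mem hh, h * n⁻¹ * h⁻¹, hconj h hh n⁻¹ (N.inv_mem hn), ?_⟩
    group
  · exact hH.mul hNcompact
  · apply Subgroup.isOpen_of_mem_nhds
    apply Filter.mem_of_superset (hNopen.mem_nhds N.one_mem)
    exact fun n hn => ⟨1, H.one_mem, n, hn, by simp⟩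
  · exact fun h hh => ⟨h, hh, 1, N.one_mem, by simp⟩
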